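/- Let G be a finite simple graph on vertex set {1,…,n} (no self-loops) in which every vertex has at least one neighbor, with graph Laplacian L. If a matrix P ∈ ℝ^{n×d} satisfies L = P Pᵀ, then P is both node-identifying and adjacency-identifying. -/

import Mathlib

open Matrix

/-- The unnormalized attention matrix `(1/√d_k)·(P W^Q)(P W^K)ᵀ`. -/
noncomputable def attn {n : ℕ} {m : Type*} [Fintype m] (dk : ℝ)
    (P : Matrix (Fin n) m ℝ) (WQ WK : Matrix m m ℝ) : Matrix (Fin n) (Fin n) ℝ :=
  (1 / Real.sqrt dk) • ((P * WQ) * (P * WK)ᵀ)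

/-- `P` is node-identifying: for some `W^Q, W^K`, the `(i,j)` entry of
`(1/√d_k)·(P W^Q)(P W^K)ᵀ` is a maximum of its row exactly when `i = j`. -/
def IsNodeIdentifying {n : ℕ} {m : Type*} [Fintype m] (dk : ℝ)
    (P : Matrix (Fin n) m ℝ) : Prop :=
  ∃ WQ WK : Matrix m m ℝ, ∀ i j,
    (∀ l, attn dk P WQ WK i l ≤ attn dk P WQ WK i j) ↔ i = j

/-- `P` is adjacency-identifying: for some `W^Q, W^K`, the `(i,j)` entry of
`(1/√d_k)·(P W^Q)(P W^K)ᵀ` is a maximum of its row exactly when `i` and `j` are adjacent. -/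
def IsAdjIdentifying {n : ℕ} {m : Type*} [Fintype m] (dk : ℝ) (G : SimpleGraph (Fin n))
    (P : Matrix (Fin n) m ℝ) : Prop :=
  ∃ WQ WK : Matrix m m ℝ, ∀ i j,
    (∀ l, attn dk P WQ WK i l ≤ attn dk P WQ WK i j) ↔ G.Adj i j

lemma lap_entry {n : ℕ} (G : SimpleGraph (Fin n)) [DecidableRel G.Adj] (i j : Fin n) :
    G.lapMatrix ℝ i j =
      if i = j then (G.degree i : ℝ) else if G.Adj i j then -1 else 0 := by
  simp only [SimpleGraph.lapMatrix, SimpleGraph.degMatrix, Matrix.sub_apply,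
    Matrix.diagonal_apply, SimpleGraph.adjMatrix_apply]
  by_cases h : i = j
  · subst h; simp
  · simp only [if_neg h]
    split <;> simp

/-- if the graph Laplacian factors as `L = P Pᵀ`, then `P` is both
node-identifying and adjacency-identifying. -/
theorem stmt6 {n d : ℕ} (G : SimpleGraph (Fin n)) [DecidableRel G.Adj]
    (hdeg : ∀ v, 0 < G.degree v) (dk : ℝ) (hdk : 0 < dk)
    (P : Matrix (Fin n) (Fin d) ℝ)
    (hfac : G.lapMatrix ℝ = P * Pᵀ) :
    IsNodeIdentifying dk P ∧ IsAdjIdentifying dk G P := by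
  set c : ℝ := 1 / Real.sqrt dk with hc
  have hcpos : 0 < c := by positivity
  have hA1 : ∀ i j, attn dk P 1 1 i j = c * G.lapMatrix ℝ i j := by
    intro i j
    simp [attn, hfac, Matrix.mul_one, hc]
  have hA2 : ∀ i j, attn dk P 1 (-1) i j = -(c * G.lapMatrix ℝ i j) := by
    intro i j
    have h1 : (P * (1 : Matrix (Fin d) (Fin d) ℝ)) * (P * (-1 : Matrix (Fin d) (Fin d) ℝ))ᵀ
        = -(P * Pᵀ) := by
      simp [Matrix.mul_one, Matrix.mul_neg, Matrix.transpose_neg, Matrix.neg_mul]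
    simp [attn, h1, hfac, hc]
  constructor
  · refine ⟨1, 1, fun i j => ?_⟩
    constructor
    · intro h
      by_contra hne
      have := h i
      rw [hA1, hA1, lap_entry, lap_entry] at this
      simp only [if_pos rfl, if_neg (Ne.symm (fun e => hne e.symm) : ¬ i = j)] at this
      have hle : c * (G.degree i : ℝ) ≤ c * (if G.Adj i j then -1 else 0) := by
        simpa [hne] using this
      have h1 : (if G.Adj i j then (-1 : ℝ) else 0) ≤ 0 := by split <;> norm_num
      have h2 : (0 : ℝ) < (G.degree i : ℝ) := by exact_mod_cast hdeg i
      nlinarith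
    · rintro rfl
      intro l
      rw [hA1, hA1, lap_entry, lap_entry, if_pos rfl]
      have h2 : (0 : ℝ) < (G.degree i : ℝ) := by exact_mod_cast hdeg i
      by_cases hl : i = l
      · rw [if_pos hl]
      · rw [if_neg hl]
        have h1 : (if G.Adj i l then (-1 : ℝ) else 0) ≤ 0 := by split <;> norm_num
        nlinarith
  · refine ⟨1, -1, fun i j => ?_⟩
    have key : ∀ l, -(c * G.lapMatrix ℝ i l) ≤ c := by
      intro l
      rw [lap_entry]
      have h2 : (0 : ℝ) < (G.degree i : ℝ) := by exact_mod_cast hdeg i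
      by_cases hl : i = l
      · rw [if_pos hl]; nlinarith
      · rw [if_neg hl]; split <;> nlinarith
    constructor
    · intro h
      by_contra hadj
      obtain ⟨l0, hl0⟩ := (G.degree_pos_iff_exists_adj i).mp (hdeg i)
      have := h l0
      rw [hA2, hA2, lap_entry, lap_entry] at this
      have hii : i ≠ l0 := fun e => G.loopless.irrefl i (e ▸ hl0)
      rw [if_neg hii, if_pos hl0] at this
      by_cases hij : i = j
      · rw [if_pos hij] at this
        have h2 : (0 : ℝ) < (G.degree i : ℝ) := by exact_mod_cast hdeg i
        nlinarith
      · rw [if_neg hij, if_neg hadj] at this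
        nlinarith
    · intro hadj l
      rw [hA2, hA2]
      have hij : i ≠ j := fun e => G.loopless.irrefl i (e ▸ hadj)
      rw [lap_entry G i j, if_neg hij, if_pos hadj]
      have := key l
      simpa using this
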